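/- If U is a Laver ultrafilter on ℕ, then for every strictly increasing f : ℕ → ℕ, U is a 𝒴_f^0-ultrafilter: for every function F : ℕ → 2^ω there exists x ∈ U such that the topological closure of F[x] in 2^ω belongs to the Yorioka ideal 𝒴_f. -/

import Mathlib

/-- A partition of a set `S` into finitely many (nonempty, pairwise disjoint) pieces
covering everything. -/
def IsFinPartition {S : Type*} (P : Set (Set S)) : Prop :=
  P.Finite ∧ ∅ ∉ P ∧ ⋃₀ P = Set.univ ∧ P.Pairwise Disjoint

/-- A Laver ultrafilter. -/
def IsLaverUltrafilter {S : Type*} (U : Ultrafilter S) : Prop :=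
  Filter.cofinite ≤ (U : Filter S) ∧
  ∀ P : ℕ → Set (Set S), (∀ n, IsFinPartition (P n)) →
    ∃ x ∈ U, ∀ n, {p ∈ P n | (x ∩ p).Nonempty}.ncard ≤ n + 1

/-- The basic clopen set `[s]` of branches through the finite binary sequence `s`. -/
def cylinder (s : List Bool) : Set (ℕ → Bool) :=
  {x | ∀ i : Fin s.length, x i = s.get i}

/-- `[σ]_∞ := ⋂_n ⋃_{m ≥ n} [σ(m)]`. -/
def limsupCyl (σ : ℕ → List Bool) : Set (ℕ → Bool) :=
  ⋂ n, ⋃ m ≥ n, cylinder (σ m)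

/-- `f ≪ g` iff for every `k`, `f (i ^ k) ≤ g i` for all but finitely many `i`. -/
def ll (f g : ℕ → ℕ) : Prop :=
  ∀ k : ℕ, ∀ᶠ i in Filter.atTop, f (i ^ k) ≤ g i

/-- The Yorioka ideal `𝒴_f`. -/
def Yorioka (f : ℕ → ℕ) : Set (Set (ℕ → Bool)) :=
  {X | ∃ σ : ℕ → List Bool, X ⊆ limsupCyl σ ∧ ll f (fun i => (σ i).length)}

namespace Stmt9Aux

/-- Restriction of `F m` to the first `L` coordinates. -/
def restr (F : ℕ → (ℕ → Bool)) (L : ℕ) (m : ℕ) : Fin L → Bool := fun i => F m i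

/-- Extend a finite binary sequence to a full function, padding with `false`. -/
def extFn {L : ℕ} (v : Fin L → Bool) : ℕ → Bool :=
  fun t => if h : t < L then v ⟨t, h⟩ else false

/-- Equivalence class: all `m` whose restriction is `v`. -/
def cls (F : ℕ → (ℕ → Bool)) (L : ℕ) (v : Fin L → Bool) : Set ℕ :=
  {m | restr F L m = v}

/-- The partition of ℕ by the value of `restr F L`. -/
def part (F : ℕ → (ℕ → Bool)) (L : ℕ) : Set (Set ℕ) :=
  cls F L '' Set.range (restr F L)

lemma injOn_cls (F : ℕ → (ℕ → Bool)) (L : ℕ) :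
    Set.InjOn (cls F L) (Set.range (restr F L)) := by
  rintro v ⟨m, rfl⟩ v' _ h
  have hm : m ∈ cls F L (restr F L m) := rfl
  rw [h] at hm
  exact hm

lemma part_isFinPartition (F : ℕ → (ℕ → Bool)) (L : ℕ) :
    IsFinPartition (part F L) := by
  refine ⟨(Set.toFinite _).image _, ?_, ?_, ?_⟩
  · rintro ⟨v, ⟨m, rfl⟩, h0⟩
    have : m ∈ cls F L (restr F L m) := rfl
    rw [h0] at this
    exact this
  · ext m
    simp only [Set.mem_sUnion, Set.mem_univ, iff_true]
    exact ⟨cls F L (restr F L m), ⟨restr F L m, ⟨m, rfl⟩, rfl⟩, rfl⟩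
  · rintro _ ⟨v, hv, rfl⟩ _ ⟨v', hv', rfl⟩ hne
    rw [Set.disjoint_left]
    intro m hm hm'
    exact hne (by rw [show v = v' from hm.symm.trans hm'])

lemma meets_eq (F : ℕ → (ℕ → Bool)) (L : ℕ) (x : Set ℕ) :
    {p ∈ part F L | (x ∩ p).Nonempty} = cls F L '' (restr F L '' x) := by
  ext p
  constructor
  · rintro ⟨⟨v, hv, rfl⟩, m, hmx, hmc⟩
    exact ⟨restr F L m, ⟨m, hmx, rfl⟩, by rw [show restr F L m = v from hmc]⟩
  · rintro ⟨v, ⟨m, hmx, rfl⟩, rfl⟩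
    exact ⟨⟨restr F L m, ⟨m, rfl⟩, rfl⟩, m, hmx, rfl⟩

lemma mem_cylinder_ofFn {Ln : ℕ} (g : ℕ → Bool) (y : ℕ → Bool)
    (h : ∀ t, t < Ln → y t = g t) :
    y ∈ cylinder (List.ofFn (fun t : Fin Ln => g t)) := by
  intro idx
  have hlt : (idx : ℕ) < Ln :=
    lt_of_lt_of_le idx.isLt (le_of_eq List.length_ofFn)
  rw [List.get_ofFn]
  simpa using h idx hlt

end Stmt9Aux

open Stmt9Aux in
theorem stmt_9 (U : Ultrafilter ℕ) (hU : IsLaverUltrafilter U)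
    (f : ℕ → ℕ) (hf : StrictMono f) (F : ℕ → (ℕ → Bool)) :
    ∃ x ∈ U, closure (F '' x) ∈ Yorioka f := by
  classical
  set L : ℕ → ℕ := fun n => f (2 ^ ((n + 1) * n)) with hLdef
  obtain ⟨x, hx, hcard⟩ :=
    hU.2 (fun n => part F (L n)) (fun n => part_isFinPartition F (L n))
  refine ⟨x, hx, ?_⟩
  have hxne : x.Nonempty := U.nonempty_of_mem hx
  -- the realized restrictions at stage n
  have hRfin : ∀ n, (restr F (L n) '' x).Finite := fun n => Set.toFinite _
  have hRcard : ∀ n, (restr F (L n) '' x).ncard ≤ n + 1 := by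
    intro n
    have h := hcard n
    rw [meets_eq, Set.ncard_image_of_injOn
      ((injOn_cls F (L n)).mono (Set.image_subset_range _ _))] at h
    exact h
  -- the list of (extensions of) realized restrictions at stage n
  set l : ℕ → List (ℕ → Bool) :=
    fun n => ((hRfin n).toFinset.toList).map extFn with hldef
  have hlen : ∀ n, (l n).length ≤ n + 1 := by
    intro n
    rw [hldef]
    rw [List.length_map, Finset.length_toList, ← Set.ncard_eq_toFinset_card]
    exact hRcard n
  have hlpos : ∀ n, 0 < (l n).length := by
    intro n
    rw [hldef]
    rw [List.length_map, Finset.length_toList, Finset.card_pos,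
      Set.Finite.toFinset_nonempty]
    exact hxne.image _
  have hlmem : ∀ n v, v ∈ restr F (L n) '' x → extFn v ∈ l n := by
    intro n v hv
    rw [hldef]
    exact List.mem_map_of_mem (by rw [Finset.mem_toList, Set.Finite.mem_toFinset]; exact hv)
  -- the witnessing σ
  set σ : ℕ → List Bool := fun i =>
    List.ofFn (fun t : Fin (L (Nat.log 2 i)) =>
      (l (Nat.log 2 i)).getD ((i - 2 ^ (Nat.log 2 i)) % (l (Nat.log 2 i)).length)
        (fun _ => false) t) with hσdef
  have hσlen : ∀ i, (σ i).length = L (Nat.log 2 i) := by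
    intro i; rw [hσdef]; exact List.length_ofFn
  refine ⟨σ, ?_, ?_⟩
  · -- closure (F '' x) ⊆ limsupCyl σ
    intro y hy
    rw [limsupCyl, Set.mem_iInter]
    intro N
    rw [Set.mem_iUnion₂]
    -- the restriction of y to L N coordinates is realized on x
    have hO : ∃ m ∈ x, ∀ i : Fin (L N), F m i = y i := by
      have hopen : IsOpen {z : ℕ → Bool | ∀ i : Fin (L N), z i = y i} := by
        have : {z : ℕ → Bool | ∀ i : Fin (L N), z i = y i} =
            ⋂ i : Fin (L N), (fun z : ℕ → Bool => z i) ⁻¹' {y i} := by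
          ext z; simp [Set.mem_iInter]
        rw [this]
        exact isOpen_iInter_of_finite fun i =>
          (isOpen_discrete _).preimage (continuous_apply (i : ℕ))
      obtain ⟨z, hz, m, hmx, rfl⟩ := (mem_closure_iff.mp hy) _ hopen (fun i => rfl)
      exact ⟨m, hmx, hz⟩
    obtain ⟨m, hmx, hm⟩ := hO
    have hv : extFn (restr F (L N) m) ∈ l N := hlmem N _ ⟨m, hmx, rfl⟩
    obtain ⟨j, hj, hget⟩ := List.mem_iff_getElem.mp hv
    have hjN : j < 2 ^ N := lt_of_lt_of_le (lt_of_lt_of_le hj (hlen N)) (Nat.lt_two_pow_self)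
    set i0 : ℕ := 2 ^ N + j with hi0
    have hlog : Nat.log 2 i0 = N := by
      apply Nat.log_eq_of_pow_le_of_lt_pow (Nat.le_add_right _ _)
      calc 2 ^ N + j < 2 ^ N + 2 ^ N := by omega
        _ = 2 ^ (N + 1) := by ring
    refine ⟨i0, le_trans (le_of_lt (Nat.lt_two_pow_self)) (Nat.le_add_right _ _), ?_⟩
    -- the chosen slot holds exactly (the extension of) y's restriction
    have hD : (l N).getD ((i0 - 2 ^ N) % (l N).length) (fun _ => false)
        = extFn (restr F (L N) m) := by
      rw [hi0, Nat.add_sub_cancel_left, Nat.mod_eq_of_lt hj,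
        List.getD_eq_getElem _ _ hj, hget]
    have hD' : (l (Nat.log 2 i0)).getD
        ((i0 - 2 ^ (Nat.log 2 i0)) % (l (Nat.log 2 i0)).length) (fun _ => false)
        = extFn (restr F (L N) m) := by
      rw [hlog]; exact hD
    have hσeq : σ i0 = List.ofFn
        (fun t : Fin (L (Nat.log 2 i0)) => extFn (restr F (L N) m) t) :=
      congrArg List.ofFn (funext fun t => congrFun hD' t)
    rw [hσeq]
    apply mem_cylinder_ofFn
    intro t ht
    have htN : t < L N := by rwa [hlog] at ht
    simp only [extFn, restr, htN, dif_pos]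
    exact (hm ⟨t, htN⟩).symm
  · -- ll f (fun i => (σ i).length)
    intro k
    rw [Filter.eventually_atTop]
    refine ⟨2 ^ k, fun i hi => ?_⟩
    have hipos : i ≠ 0 := by
      have : 0 < 2 ^ k := Nat.pow_pos (by norm_num)
      omega
    set n := Nat.log 2 i with hn
    have hkn : k ≤ n := (Nat.le_log_iff_pow_le (by norm_num) hipos).mpr hi
    have hilt : i < 2 ^ (n + 1) := Nat.lt_pow_succ_log_self (by norm_num) i
    have h1 : i ^ k ≤ 2 ^ ((n + 1) * n) := by
      calc i ^ k ≤ (2 ^ (n + 1)) ^ k := Nat.pow_le_pow_left (le_of_lt hilt) k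
        _ = 2 ^ ((n + 1) * k) := by rw [← pow_mul]
        _ ≤ 2 ^ ((n + 1) * n) := Nat.pow_le_pow_right (by norm_num)
            (Nat.mul_le_mul_left _ hkn)
    show f (i ^ k) ≤ (σ i).length
    rw [hσlen i]
    exact hf.monotone h1
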